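/- Suppose Pr(κ) holds and P is a forcing notion with the μ⁺-chain condition for some μ < κ. Then Pr(κ) holds in the generic extension by P. -/

import Mathlib

open Cardinal

universe u

/-- An algebra: a carrier `M` with a set of finitary operations (for each arity `n`,
a set of `n`-ary functions). -/
structure FAlg (M : Type u) where
  ops : ∀ n : ℕ, Set ((Fin n → M) → M)

/-- `S` is a subalgebra: closed under all operations. -/
def FAlg.IsSubalg {M : Type u} (A : FAlg M) (S : Set M) : Prop :=
  ∀ ⦃n : ℕ⦄, ∀ f ∈ A.ops n, ∀ x : Fin n → M, (∀ i, x i ∈ S) → f x ∈ S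

/-- The least subalgebra containing `B`. -/
def FAlg.Cl {M : Type u} (A : FAlg M) (B : Set M) : Set M :=
  ⋂₀ {S : Set M | A.IsSubalg S ∧ B ⊆ S}

/-- `B` is free for the algebra `A`. -/
def FAlg.IsFree {M : Type u} (A : FAlg M) (B : Set M) : Prop :=
  ∀ a ∈ B, a ∉ A.Cl (B \ {a})

/-- The number of operations of the algebra. -/
def FAlg.opsCard {M : Type u} (A : FAlg M) : Cardinal.{u} :=
  #(Σ n : ℕ, ↥(A.ops n))

/-- `Pr κ`: every algebra on a set of size `κ` with fewer than `κ` operations has a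
free subset of cardinality `κ`. -/
def Pr (κ : Cardinal.{u}) : Prop :=
  ∀ (M : Type u) (A : FAlg M), #M = κ → A.opsCard < κ →
    ∃ B : Set M, A.IsFree B ∧ #B = κ

/-- Two forcing conditions are compatible if they have a common extension. -/
def Compat {P : Type u} [Preorder P] (p q : P) : Prop :=
  ∃ r, r ≤ p ∧ r ≤ q

lemma FAlg.subset_Cl {M : Type u} (A : FAlg M) (B : Set M) : B ⊆ A.Cl B :=
  fun _ ha S hS => hS.2 ha

lemma FAlg.Cl_isSubalg {M : Type u} (A : FAlg M) (B : Set M) : A.IsSubalg (A.Cl B) := by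
  intro n f hf x hx S hS
  exact hS.1 f hf x fun i => hx i S hS

/-- From `Pr κ` and `1 < κ` we get that `κ` is uncountable. -/
lemma pr_aleph0_lt {κ : Cardinal.{u}} (hPr : Pr κ) (h2 : 1 < κ) : ℵ₀ < κ := by
  have hpos : κ ≠ 0 := by positivity
  -- first: ℵ₀ ≤ κ
  have hle : ℵ₀ ≤ κ := by
    by_contra hfin
    push_neg at hfin
    obtain ⟨m, rfl⟩ := Cardinal.lt_aleph0.mp hfin
    set M : Type u := (↑m : Cardinal.{u}).out with hMdef
    have hMm : #M = (m : Cardinal.{u}) := Cardinal.mk_out _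
    haveI : Nonempty M := by
      rw [← Cardinal.mk_ne_zero_iff, hMm]; exact_mod_cast hpos
    set c : M := Classical.arbitrary M with hc
    set A : FAlg M := ⟨fun k => {f | k = 0 ∧ ∀ x, f x = c}⟩ with hA
    have hops : A.opsCard < (m : Cardinal.{u}) := by
      refine lt_of_le_of_lt (Cardinal.le_one_iff_subsingleton.mpr ?_) h2
      constructor
      rintro ⟨k, f, rfl, hf⟩ ⟨k', f', rfl, hf'⟩
      have : f = f' := funext fun x => (hf x).trans (hf' x).symm
      cases this; rfl
    obtain ⟨B, hfree, hB⟩ := hPr M A hMm hops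
    have hcCl : ∀ S : Set M, c ∈ A.Cl S := by
      intro S T hT
      exact hT.1 (fun _ => c) ⟨rfl, fun _ => rfl⟩ Fin.elim0 (fun i => i.elim0)
    have hcB : c ∉ B := fun h => hfree c h (hcCl _)
    have hins : #(insert c B : Set M) = (m : Cardinal.{u}) + 1 := by
      rw [Cardinal.mk_insert hcB, hB]
    have hle' : ((m : Cardinal.{u}) + 1) ≤ (m : Cardinal.{u}) := by
      rw [← hins, ← hMm]; exact Cardinal.mk_set_le _
    have : ((m + 1 : ℕ) : Cardinal.{u}) ≤ (m : Cardinal.{u}) := by push_cast; exact hle'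
    have := Nat.cast_le.mp this
    omega
  rcases hle.lt_or_eq with h | heq
  · exact h
  -- κ = ℵ₀: refute using the successor algebra on ℕ
  exfalso
  set M : Type u := ULift.{u} ℕ with hMdef
  have hMκ : #M = κ := by rw [← heq]; simp
  set A : FAlg M := ⟨fun k => {f | ∃ h : k = 1,
      ∀ x, f x = ULift.up ((x (Fin.cast h.symm 0)).down + 1)}⟩ with hA
  have hops : A.opsCard < κ := by
    refine lt_of_le_of_lt (Cardinal.le_one_iff_subsingleton.mpr ?_) h2
    constructor
    rintro ⟨k, f, rfl, hf⟩ ⟨k', f', rfl, hf'⟩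
    have : f = f' := funext fun x => (hf x).trans (hf' x).symm
    cases this; rfl
  obtain ⟨B, hfree, hB⟩ := hPr M A hMκ hops
  have hBinf : B.Infinite := by
    rw [← Set.infinite_coe_iff, ← Cardinal.aleph0_le_mk_iff (α := ↥B), hB, heq]
  have hDinf : (ULift.down '' B : Set ℕ).Infinite :=
    hBinf.image (Set.injOn_of_injective (fun a b h => by cases a; cases b; cases h; rfl))
  obtain ⟨b, hbD⟩ := hDinf.nonempty
  obtain ⟨a, haD, hba⟩ := hDinf.exists_gt b
  obtain ⟨a₀, ha₀B, ha₀⟩ := haD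
  obtain ⟨b₀, hb₀B, hb₀⟩ := hbD
  -- all numbers b + k are in the closure of B \ {a₀}
  have hclosed : ∀ k : ℕ, ULift.up.{u} (b + k) ∈ A.Cl (B \ {a₀}) := by
    intro k
    induction k with
    | zero =>
        have : b₀ ∈ B \ {a₀} := ⟨hb₀B, by
          intro h
          rw [Set.mem_singleton_iff] at h
          subst h; rw [ha₀] at hb₀; omega⟩
        have hb₀' : (ULift.up.{u} (b + 0) : M) = b₀ := by
          cases b₀; simp_all
        rw [hb₀']
        exact A.subset_Cl _ this
    | succ k ih =>
        have := A.Cl_isSubalg (B \ {a₀}) (n := 1)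
          (fun x => ULift.up ((x (Fin.cast rfl 0)).down + 1)) ⟨rfl, fun _ => rfl⟩
          (fun _ => ULift.up (b + k)) (fun _ => ih)
        simpa [Nat.add_assoc] using this
  have : a₀ ∈ A.Cl (B \ {a₀}) := by
    have := hclosed (a - b)
    have he : (ULift.up.{u} (b + (a - b)) : M) = a₀ := by
      cases a₀; simp at ha₀; subst ha₀; congr 1; omega
    rwa [he] at this
  exact hfree a₀ ha₀B this

/-- `Pr κ` is preserved by forcing with the `μ⁺`-chain condition for `μ < κ`: given names
`Ḟ_i` for the operations of an algebra on a ground-model set `M` of size `κ` (described by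
the relation `forces i p a b` meaning `p ⊩ Ḟ_i(a) = b`), there is a ground-model set `I`
of size `κ` which is free for every possible realization of the named algebra. -/
theorem stmt_16 (κ μ : Cardinal.{u}) (hμκ : μ < κ) (hPr : Pr κ)
    (P : Type u) [Preorder P]
    (hcc : ∀ A : Set P, (∀ p ∈ A, ∀ q ∈ A, p ≠ q → ¬Compat p q) → #A ≤ μ)
    (M : Type u) (hM : #M = κ)
    (ι : Type u) (hι : #ι < κ) (n : ι → ℕ)
    (forces : ∀ i : ι, P → (Fin (n i) → M) → M → Prop)
    (htotal : ∀ (i : ι) (a : Fin (n i) → M) (p : P),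
      ∃ q b, q ≤ p ∧ forces i q a b)
    (hcoh : ∀ (i : ι) (a : Fin (n i) → M) (b b' : M) (p q : P),
      forces i p a b → forces i q a b' → b ≠ b' → ¬Compat p q) :
    ∃ I : Set M, #I = κ ∧
      ∀ g : (i : ι) → (Fin (n i) → M) → M,
        (∀ (i : ι) (a : Fin (n i) → M), ∃ p : P, forces i p a (g i a)) →
        FAlg.IsFree
          ⟨fun m => {f | ∃ (i : ι) (h : n i = m),
            ∀ x : Fin m → M, f x = g i fun j => x (Fin.cast h j)}⟩ I := by
  obtain hι0 | hι0 := isEmpty_or_nonempty ι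
  · -- no operations at all: the universe works
    refine ⟨Set.univ, by simpa using hM, ?_⟩
    intro g hg a _ hmem
    have hsub : FAlg.IsSubalg
        ⟨fun m => {f | ∃ (i : ι) (h : n i = m),
          ∀ x : Fin m → M, f x = g i fun j => x (Fin.cast h j)}⟩ (Set.univ \ {a}) := by
      rintro m f ⟨i, _⟩
      exact hι0.elim i
    exact (hmem _ ⟨hsub, subset_rfl⟩).2 rfl
  · -- main case
    classical
    have h1κ : 1 < κ := lt_of_le_of_lt (Cardinal.one_le_iff_ne_zero.mpr
      (Cardinal.mk_ne_zero ι)) hι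
    have hκinf : ℵ₀ < κ := pr_aleph0_lt hPr h1κ
    haveI : Nonempty M := by
      rw [← Cardinal.mk_ne_zero_iff, hM]
      exact fun h => (by simp [h] at h1κ)
    -- the set of possible values of Ḟ_i(a)
    set Vals : ∀ i : ι, (Fin (n i) → M) → Set M :=
      fun i a => {b | ∃ p, forces i p a b} with hVals
    have hValsμ : ∀ (i : ι) (a : Fin (n i) → M), #(Vals i a) ≤ μ := by
      intro i a
      have hch : ∀ b : Vals i a, ∃ p, forces i p a ↑b := fun b => b.2
      choose pf hpf using hch
      have hinj : Function.Injective pf := by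
        intro b b' h
        by_contra hne
        refine hcoh i a b b' _ _ (hpf b) (hpf b')
          (fun e => hne (Subtype.ext e)) ⟨pf b, le_refl _, h ▸ le_refl _⟩
      have hanti : #(Set.range pf) ≤ μ := by
        refine hcc _ ?_
        rintro p ⟨b, rfl⟩ q ⟨b', rfl⟩ hne
        exact hcoh i a b b' _ _ (hpf b) (hpf b')
          (fun e => hne (by rw [Subtype.ext e]))
      rw [← Cardinal.mk_range_eq pf hinj]
      exact hanti
    -- enumerate the possible values by Option μ.out
    have emb : ∀ (i : ι) (a : Fin (n i) → M), ↥(Vals i a) ↪ μ.out := fun i a =>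
      Classical.choice (by rw [← Cardinal.le_def, Cardinal.mk_out]; exact hValsμ i a)
    set E : ∀ i : ι, (Fin (n i) → M) → Option μ.out → M :=
      fun i a t => t.elim (Classical.arbitrary M)
        (fun u => if h : ∃ b : Vals i a, emb i a b = u then ((h.choose : Vals i a) : M)
          else Classical.arbitrary M) with hE
    have hEcov : ∀ (i : ι) (a : Fin (n i) → M) (b : M), b ∈ Vals i a →
        ∃ t, E i a t = b := by
      intro i a b hb
      refine ⟨some (emb i a ⟨b, hb⟩), ?_⟩
      have hex : ∃ b' : Vals i a, emb i a b' = emb i a ⟨b, hb⟩ := ⟨⟨b, hb⟩, rfl⟩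
      have : E i a (some (emb i a ⟨b, hb⟩)) = ((hex.choose : Vals i a) : M) := by
        simp only [hE, Option.elim]
        rw [dif_pos hex]
      rw [this, (emb i a).injective hex.choose_spec]
    -- the ground-model algebra
    set A : FAlg M := ⟨fun m => {f | ∃ (i : ι) (t : Option μ.out) (h : n i = m),
      f = fun x => E i (fun j => x (Fin.cast h j)) t}⟩ with hA
    have hops : A.opsCard < κ := by
      have key : ∀ (m : ℕ) (i i' : ι) (t t' : Option μ.out) (h1 : n i = m)
          (h1' : n i' = m), i = i' → t = t' →
          (fun x : Fin m → M => E i (fun j => x (Fin.cast h1 j)) t) =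
          (fun x : Fin m → M => E i' (fun j => x (Fin.cast h1' j)) t') := by
        rintro m i i' t t' h1 h1' rfl rfl; rfl
      have hw : A.opsCard ≤ #(ι × Option μ.out) := by
        refine Cardinal.mk_le_of_injective (f := fun s : Σ m : ℕ, ↥(A.ops m) =>
          ((s.2.2.choose, s.2.2.choose_spec.choose) : ι × Option μ.out)) ?_
        rintro ⟨m, f⟩ ⟨m', f'⟩ h
        simp only [Prod.mk.injEq] at h
        obtain ⟨hi, ht⟩ := h
        obtain ⟨h1, e1⟩ := f.2.choose_spec.choose_spec
        obtain ⟨h1', e1'⟩ := f'.2.choose_spec.choose_spec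
        have hm : m = m' := h1 ▸ hi ▸ h1'
        subst hm
        have : (f : (Fin m → M) → M) = f' := by
          rw [e1, e1']
          exact key m _ _ _ _ h1 h1' hi ht
        have : f = f' := Subtype.ext this
        rw [this]
      refine lt_of_le_of_lt hw ?_
      have : #(ι × Option μ.out) = #ι * (μ + 1) := by
        rw [Cardinal.mk_prod, Cardinal.lift_id, Cardinal.lift_id, Cardinal.mk_option,
          Cardinal.mk_out]
      rw [this]
      refine Cardinal.mul_lt_of_lt hκinf.le hι ?_
      refine Cardinal.add_lt_of_lt hκinf.le hμκ h1κ
    obtain ⟨B, hfree, hB⟩ := hPr M A hM hops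
    refine ⟨B, hB, ?_⟩
    intro g hg
    set Ag : FAlg M := ⟨fun m => {f | ∃ (i : ι) (h : n i = m),
      ∀ x : Fin m → M, f x = g i fun j => x (Fin.cast h j)}⟩ with hAg
    -- every A-subalgebra is an Ag-subalgebra
    have hsub : ∀ S : Set M, A.IsSubalg S → Ag.IsSubalg S := by
      intro S hS m f hf x hx
      obtain ⟨i, h, hfx⟩ := hf
      have hb : g i (fun j => x (Fin.cast h j)) ∈ Vals i (fun j => x (Fin.cast h j)) :=
        hg i _
      obtain ⟨t, htE⟩ := hEcov i _ _ hb
      have hmem : (fun y : Fin m → M => E i (fun j => y (Fin.cast h j)) t) ∈ A.ops m :=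
        ⟨i, t, h, rfl⟩
      have := hS _ hmem x hx
      rw [hfx x, ← htE]
      exact this
    intro a haB hCl
    refine hfree a haB ?_
    exact hCl (A.Cl (B \ {a})) ⟨hsub _ (A.Cl_isSubalg _), A.subset_Cl _⟩
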